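/- Let u1, u2 be unit vectors in ℂ^d with |⟨u1, u2⟩|² ≤ 1/2, and set σi = ui uiᴴ for i = 1, 2. Then σ1 ⊗ σ1 and σ2 ⊗ σ2 are perfectly distinguishable in SEP on the bipartite system ℂ^d ⊗ ℂ^d. -/

import Mathlib

open Matrix Kronecker ComplexOrder

noncomputable section

abbrev Mat (dA dB : ℕ) := Matrix (Fin dA × Fin dB) (Fin dA × Fin dB) ℂ

/-- Membership in the dual cone SEP*. -/
def InSEPDual {dA dB : ℕ} (M : Mat dA dB) : Prop :=
  M.IsHermitian ∧ ∀ (A : Matrix (Fin dA) (Fin dA) ℂ) (B : Matrix (Fin dB) (Fin dB) ℂ),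
    A.PosSemidef → B.PosSemidef → 0 ≤ ((A ⊗ₖ B) * M).trace

/-- Perfect distinguishability of two states in SEP. -/
def PerfDistSEP {dA dB : ℕ} (ρ1 ρ2 : Mat dA dB) : Prop :=
  ∃ M1 M2 : Mat dA dB, InSEPDual M1 ∧ InSEPDual M2 ∧ M1 + M2 = 1 ∧
    (M1 * ρ1).trace = 1 ∧ (M2 * ρ2).trace = 1 ∧ (M2 * ρ1).trace = 0 ∧ (M1 * ρ2).trace = 0

/-- Pure state (outer product `v vᴴ`) of a vector. -/
def outer {d : ℕ} (u : Fin d → ℂ) : Matrix (Fin d) (Fin d) ℂ :=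
  vecMulVec u (star u)

namespace TwoCopy

variable {d : ℕ}

def op (u v : Fin d → ℂ) : Matrix (Fin d) (Fin d) ℂ := vecMulVec u (star v)

lemma op_mul_op (u v x y : Fin d → ℂ) :
    op u v * op x y = (star v ⬝ᵥ x) • op u y := by
  ext i j
  simp [op, mul_apply, vecMulVec_apply, dotProduct, Finset.sum_mul, Finset.mul_sum]
  congr 1; ext k; ring

lemma trace_op (u v : Fin d → ℂ) : (op u v).trace = star v ⬝ᵥ u := by
  simp [op, trace, diag, vecMulVec_apply, dotProduct]
  congr 1; ext k; ring

lemma trace_mul_op (A : Matrix (Fin d) (Fin d) ℂ) (u v : Fin d → ℂ) :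
    (A * op u v).trace = star v ⬝ᵥ (A *ᵥ u) := by
  simp [trace, diag, mul_apply, op, vecMulVec_apply, dotProduct, mulVec, Finset.mul_sum]
  exact Finset.sum_congr rfl fun k _ => Finset.sum_congr rfl fun i _ => by ring

lemma op_conjT (u v : Fin d → ℂ) : (op u v)ᴴ = op v u := by
  ext i j
  simp [op, conjTranspose_apply, vecMulVec_apply, mul_comm]

lemma kron_conjT (A B : Matrix (Fin d) (Fin d) ℂ) : (A ⊗ₖ B)ᴴ = Aᴴ ⊗ₖ Bᴴ := by
  ext ⟨i,j⟩ ⟨k,l⟩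
  simp [conjTranspose_apply, kroneckerMap_apply, mul_comm]

lemma psd_trace_nonneg {A : Matrix (Fin d) (Fin d) ℂ} (hA : A.PosSemidef) :
    0 ≤ A.trace := by
  rw [Matrix.trace]
  apply Finset.sum_nonneg
  intro i _
  have := hA.dotProduct_mulVec_nonneg (Pi.single i 1)
  simpa [dotProduct, mulVec, Pi.single_apply, Finset.sum_ite_eq, diag] using this

lemma herm_quad_conj {A : Matrix (Fin d) (Fin d) ℂ} (hA : A.IsHermitian) (u v : Fin d → ℂ) :
    star (star u ⬝ᵥ (A *ᵥ v)) = star v ⬝ᵥ (A *ᵥ u) := by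
  have h := hA.eq
  simp only [dotProduct, mulVec, star_sum, star_mul', Pi.star_apply, star_star, Finset.mul_sum]
  rw [Finset.sum_comm]
  refine Finset.sum_congr rfl fun i _ => Finset.sum_congr rfl fun j _ => ?_
  have : A j i = star (A i j) := by
    conv_lhs => rw [← h]
    simp [conjTranspose_apply]
  rw [this]
  simp [star_mul']
  ring

lemma scalar_norm (r w x1 z1 x2 z2 : ℝ) (hr : 0 ≤ r) (hrw : r ≤ w)
    (hw2 : w ^ 2 = 1 - r ^ 2) (h1 : x1 ^ 2 + z1 ^ 2 ≤ 1) (h2 : x2 ^ 2 + z2 ^ 2 ≤ 1) :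
    0 ≤ 2 * w ^ 3 + (w ^ 2 - r ^ 2) * (x1 + x2) + r * (x1 * z2 + x2 * z1) := by
  have hw0 : 0 ≤ w := le_trans hr hrw
  have hwc : 2 * w ^ 3 = w + w * (w ^ 2 - r ^ 2) := by linear_combination w * hw2
  nlinarith [mul_nonneg hw0 (by linarith : (0:ℝ) ≤ 1 - x1 ^ 2 - z1 ^ 2),
    mul_nonneg hw0 (by linarith : (0:ℝ) ≤ 1 - x2 ^ 2 - z2 ^ 2),
    mul_nonneg hr (sq_nonneg ((x1 + w) + (z2 - r))),
    mul_nonneg hr (sq_nonneg ((x2 + w) + (z1 - r))),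
    mul_nonneg (by linarith : (0:ℝ) ≤ w - r) (sq_nonneg (x1 + w)),
    mul_nonneg (by linarith : (0:ℝ) ≤ w - r) (sq_nonneg (z2 - r)),
    mul_nonneg (by linarith : (0:ℝ) ≤ w - r) (sq_nonneg (x2 + w)),
    mul_nonneg (by linarith : (0:ℝ) ≤ w - r) (sq_nonneg (z1 - r))]

lemma scalar_key (r w a1 x1 z1 a2 x2 z2 : ℝ) (hr : 0 ≤ r) (hrw : r ≤ w) (hwpos : 0 < w)
    (hw2 : w ^ 2 = 1 - r ^ 2) (ha1 : 0 ≤ a1) (ha2 : 0 ≤ a2)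
    (h1 : x1 ^ 2 + z1 ^ 2 ≤ a1 ^ 2) (h2 : x2 ^ 2 + z2 ^ 2 ≤ a2 ^ 2) :
    0 ≤ (a1 * a2 + ((w ^ 2 - r ^ 2) / (2 * w ^ 3)) * (x1 * a2 + a1 * x2)
      + (r / (2 * w ^ 3)) * (x1 * z2 + z1 * x2)) / 2 := by
  have hw3 : 0 < 2 * w ^ 3 := by positivity
  have key : 0 ≤ 2 * w ^ 3 * (a1 * a2) + (w ^ 2 - r ^ 2) * (x1 * a2 + a1 * x2)
      + r * (x1 * z2 + z1 * x2) := by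
    rcases eq_or_lt_of_le ha1 with h|h
    · have hx1 : x1 = 0 := by nlinarith
      have hz1 : z1 = 0 := by nlinarith
      rw [hx1, hz1, ← h]; ring_nf; exact le_refl 0
    rcases eq_or_lt_of_le ha2 with g|g
    · have hx2 : x2 = 0 := by nlinarith
      have hz2 : z2 = 0 := by nlinarith
      rw [hx2, hz2, ← g]; ring_nf; exact le_refl 0
    have hn := scalar_norm r w (x1 / a1) (z1 / a1) (x2 / a2) (z2 / a2) hr hrw hw2
      (by rw [div_pow, div_pow, ← add_div, div_le_one (by positivity)]; exact h1)
      (by rw [div_pow, div_pow, ← add_div, div_le_one (by positivity)]; exact h2)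
    have hnn := mul_nonneg (mul_nonneg h.le g.le) hn
    calc (0:ℝ) ≤ a1 * a2 * (2 * w ^ 3 + (w ^ 2 - r ^ 2) * (x1 / a1 + x2 / a2)
        + r * (x1 / a1 * (z2 / a2) + x2 / a2 * (z1 / a1))) := hnn
      _ = 2 * w ^ 3 * (a1 * a2) + (w ^ 2 - r ^ 2) * (x1 * a2 + a1 * x2)
        + r * (x1 * z2 + z1 * x2) := by field_simp
  have heq : (a1 * a2 + ((w ^ 2 - r ^ 2) / (2 * w ^ 3)) * (x1 * a2 + a1 * x2)
      + (r / (2 * w ^ 3)) * (x1 * z2 + z1 * x2)) / 2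
      = (2 * w ^ 3 * (a1 * a2) + (w ^ 2 - r ^ 2) * (x1 * a2 + a1 * x2)
      + r * (x1 * z2 + z1 * x2)) / (2 * (2 * w ^ 3)) := by
    field_simp
  rw [heq]
  positivity

lemma psd_bloch {A : Matrix (Fin d) (Fin d) ℂ} (hA : A.PosSemidef)
    (e1 e2 : Fin d → ℂ) (he11 : star e1 ⬝ᵥ e1 = 1) (he22 : star e2 ⬝ᵥ e2 = 1)
    (he12 : star e1 ⬝ᵥ e2 = 0) (he21 : star e2 ⬝ᵥ e1 = 0) :
    ∃ a x z : ℝ, A.trace = (a : ℂ) ∧ (A * (op e1 e2 + op e2 e1)).trace = (x : ℂ) ∧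
      (A * (op e1 e1 - op e2 e2)).trace = (z : ℂ) ∧ 0 ≤ a ∧ x ^ 2 + z ^ 2 ≤ a ^ 2 := by
  set a11 : ℂ := star e1 ⬝ᵥ (A *ᵥ e1) with ha11def
  set a22 : ℂ := star e2 ⬝ᵥ (A *ᵥ e2) with ha22def
  set a12 : ℂ := star e1 ⬝ᵥ (A *ᵥ e2) with ha12def
  set a21 : ℂ := star e2 ⬝ᵥ (A *ᵥ e1) with ha21def
  have h11 : 0 ≤ a11 := hA.dotProduct_mulVec_nonneg e1
  have h22 : 0 ≤ a22 := hA.dotProduct_mulVec_nonneg e2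
  have h11re : 0 ≤ a11.re ∧ a11.im = 0 := by
    rwa [Complex.le_def, Complex.zero_re, Complex.zero_im, eq_comm] at h11
  have h22re : 0 ≤ a22.re ∧ a22.im = 0 := by
    rwa [Complex.le_def, Complex.zero_re, Complex.zero_im, eq_comm] at h22
  have h2112 : a21 = starRingEnd ℂ a12 := (herm_quad_conj hA.1 e1 e2).symm
  have hdisc : (2 * a12.re) ^ 2 ≤ 4 * (a22.re * a11.re) := by
    have hq : ∀ s : ℝ, 0 ≤ a22.re * (s * s) + (2 * a12.re) * s + a11.re := by
      intro s
      have hp := hA.dotProduct_mulVec_nonneg (e1 + (s : ℂ) • e2)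
      have hex : star (e1 + (s : ℂ) • e2) ⬝ᵥ (A *ᵥ (e1 + (s : ℂ) • e2))
          = a11 + (s : ℂ) * a12 + (s : ℂ) * a21 + (s : ℂ) * (s : ℂ) * a22 := by
        simp only [mulVec_add, mulVec_smul, dotProduct_add, add_dotProduct, dotProduct_smul,
          smul_dotProduct, star_add, star_smul, Complex.star_def, Complex.conj_ofReal,
          ha11def, ha22def, ha12def, ha21def, smul_eq_mul]
        ring
      rw [hex] at hp
      have hre := (Complex.le_def.mp hp).1
      rw [h2112] at hre
      simp only [Complex.zero_re, Complex.add_re, Complex.mul_re, Complex.mul_im,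
        Complex.ofReal_re, Complex.ofReal_im, Complex.conj_re, Complex.conj_im] at hre
      nlinarith [hre]
    have := discrim_le_zero hq
    rw [discrim] at this
    nlinarith [this]
  set P : Matrix (Fin d) (Fin d) ℂ := op e1 e1 + op e2 e2 with hPdef
  have hPP : P * P = P := by
    simp only [hPdef, add_mul, mul_add, op_mul_op, he11, he22, he12, he21, one_smul, zero_smul,
      add_zero, zero_add]
  have hPH : Pᴴ = P := by
    simp only [hPdef, conjTranspose_add, op_conjT]
  have hQpsd : ((1 - P) * A * (1 - P)).PosSemidef := by
    have h := hA.conjTranspose_mul_mul_same (B := 1 - P)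
    rwa [conjTranspose_sub, conjTranspose_one, hPH] at h
  have hQQ : (1 - P) * (1 - P) = 1 - P := by
    simp only [mul_sub, sub_mul, one_mul, mul_one, hPP]
    abel
  have htrQ : 0 ≤ (A * (1 - P)).trace := by
    have e2' : ((1 - P) * A * (1 - P)).trace = (A * (1 - P)).trace := by
      rw [Matrix.trace_mul_comm ((1 - P) * A) (1 - P), ← mul_assoc, hQQ,
        Matrix.trace_mul_comm]
    rw [← e2']
    exact psd_trace_nonneg hQpsd
  have htrP : (A * P).trace = a11 + a22 := by
    rw [hPdef, mul_add, trace_add, trace_mul_op, trace_mul_op]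
  have htrsub : (A * (1 - P)).trace = A.trace - (a11 + a22) := by
    rw [mul_sub, mul_one, trace_sub, htrP]
  have htrreal : A.trace = (A.trace.re : ℂ) := by
    have hc : starRingEnd ℂ A.trace = A.trace := by
      have := Matrix.trace_conjTranspose A
      rw [hA.1] at this
      exact this.symm
    exact (Complex.conj_eq_iff_re.mp hc).symm
  have hsum_le : a11.re + a22.re ≤ A.trace.re := by
    rw [htrsub] at htrQ
    have := (Complex.le_def.mp htrQ).1
    simp only [Complex.zero_re, Complex.sub_re, Complex.add_re] at this
    linarith
  refine ⟨A.trace.re, 2 * a12.re, a11.re - a22.re, htrreal, ?_, ?_, ?_, ?_⟩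
  · rw [mul_add, trace_add, trace_mul_op, trace_mul_op, ← ha21def, ← ha12def, h2112]
    rw [add_comm, Complex.add_conj]
  · rw [mul_sub, trace_sub, trace_mul_op, trace_mul_op, ← ha11def, ← ha22def]
    have e11 : (a11.re : ℂ) = a11 := Complex.conj_eq_iff_re.mp (Complex.conj_eq_iff_im.mpr h11re.2)
    have e22 : (a22.re : ℂ) = a22 := Complex.conj_eq_iff_re.mp (Complex.conj_eq_iff_im.mpr h22re.2)
    rw [← e11, ← e22, ← Complex.ofReal_sub]
    simp
  · linarith [h11re.1, h22re.1, hsum_le]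
  · nlinarith [h11re.1, h22re.1, hsum_le, hdisc]

end TwoCopy

open TwoCopy

set_option maxHeartbeats 2000000 in
/-- Two-copy discrimination: if `|⟨u1, u2⟩|² ≤ 1/2`, then `σ1 ⊗ σ1` and `σ2 ⊗ σ2` are
perfectly distinguishable in SEP. -/
theorem two_copy_discrimination (d : ℕ) (hd : 0 < d) (u1 u2 : Fin d → ℂ)
    (h1 : ∑ i, Complex.normSq (u1 i) = 1) (h2 : ∑ i, Complex.normSq (u2 i) = 1)
    (hover : ‖∑ i, (starRingEnd ℂ) (u1 i) * u2 i‖ ^ 2 ≤ 1 / 2) :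
    PerfDistSEP (outer u1 ⊗ₖ outer u1) (outer u2 ⊗ₖ outer u2) := by
  classical
  -- basic scalars
  set c0 : ℂ := ∑ i, (starRingEnd ℂ) (u1 i) * u2 i with hc0def
  set r : ℝ := ‖c0‖ with hrdef
  have hr0 : 0 ≤ r := norm_nonneg c0
  have hr2 : r ^ 2 ≤ 1 / 2 := hover
  set w : ℝ := Real.sqrt (1 - r ^ 2) with hwdef
  have hw2 : w ^ 2 = 1 - r ^ 2 := Real.sq_sqrt (by linarith)
  have hwpos : 0 < w := Real.sqrt_pos.mpr (by linarith)
  have hrw : r ≤ w := by nlinarith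
  have hr1 : r < 1 := by nlinarith
  -- unit vectors
  have hnorm : ∀ u : Fin d → ℂ, (∑ i, Complex.normSq (u i)) = 1 → star u ⬝ᵥ u = 1 := by
    intro u hu
    have : star u ⬝ᵥ u = ((∑ i, Complex.normSq (u i) : ℝ) : ℂ) := by
      push_cast
      simp [dotProduct, Pi.star_apply, Complex.star_def, Complex.normSq_eq_conj_mul_self]
    rw [this, hu]
    norm_num
  have hu1u1 : star u1 ⬝ᵥ u1 = 1 := hnorm u1 h1
  have hu2u2 : star u2 ⬝ᵥ u2 = 1 := hnorm u2 h2
  have hu1u2 : star u1 ⬝ᵥ u2 = c0 := by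
    simp [dotProduct, Pi.star_apply, Complex.star_def, hc0def]
  -- phase
  set ph : ℂ := if c0 = 0 then 1 else c0 / (r : ℂ) with hphdef
  have hph1 : (starRingEnd ℂ) ph * ph = 1 := by
    rw [hphdef]
    split_ifs with hc
    · simp
    · have hrne : r ≠ 0 := by
        rw [hrdef]
        exact norm_ne_zero_iff.mpr hc
      have hrneC : (r : ℂ) ≠ 0 := Complex.ofReal_ne_zero.mpr hrne
      rw [map_div₀, Complex.conj_ofReal]
      rw [div_mul_div_comm, mul_comm ((starRingEnd ℂ) c0) c0, Complex.mul_conj]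
      rw [← Complex.ofReal_mul, ← Complex.sq_norm, ← hrdef]
      rw [div_eq_one_iff_eq (by positivity)]
      push_cast
      ring
  have hphc0 : (starRingEnd ℂ) ph * c0 = (r : ℂ) := by
    rw [hphdef]
    split_ifs with hc
    · simp [hc, hrdef]
    · have hrne : r ≠ 0 := by
        rw [hrdef]
        exact norm_ne_zero_iff.mpr hc
      have hrneC : (r : ℂ) ≠ 0 := Complex.ofReal_ne_zero.mpr hrne
      rw [map_div₀, Complex.conj_ofReal, div_mul_eq_mul_div,
        mul_comm ((starRingEnd ℂ) c0) c0, Complex.mul_conj, ← Complex.sq_norm, ← hrdef]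
      rw [div_eq_iff hrneC]
      push_cast
      ring
  set v1 : Fin d → ℂ := ph • u1 with hv1def
  have hv1v1 : star v1 ⬝ᵥ v1 = 1 := by
    rw [hv1def, star_smul, smul_dotProduct, dotProduct_smul, hu1u1, smul_eq_mul, smul_eq_mul,
      mul_one]
    simpa [Complex.star_def] using hph1
  have hv1u2 : star v1 ⬝ᵥ u2 = (r : ℂ) := by
    rw [hv1def, star_smul, smul_dotProduct, hu1u2, smul_eq_mul]
    simpa [Complex.star_def] using hphc0
  have hu2v1 : star u2 ⬝ᵥ v1 = (r : ℂ) := by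
    rw [star_dotProduct, hv1u2]
    simp [Complex.star_def, Complex.conj_ofReal]
  -- orthonormal basis
  set np : ℝ := Real.sqrt (2 + 2 * r) with hnpdef
  set nm : ℝ := Real.sqrt (2 - 2 * r) with hnmdef
  have hnp2 : np ^ 2 = 2 + 2 * r := Real.sq_sqrt (by linarith)
  have hnm2 : nm ^ 2 = 2 - 2 * r := Real.sq_sqrt (by linarith)
  have hnppos : 0 < np := Real.sqrt_pos.mpr (by linarith)
  have hnmpos : 0 < nm := Real.sqrt_pos.mpr (by linarith)
  have hnpnm : np * nm = 2 * w := by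
    have h4 : (np * nm) ^ 2 = (2 * w) ^ 2 := by
      rw [mul_pow, hnp2, hnm2, mul_pow, hw2]; ring
    have h5 : np * nm = Real.sqrt ((np * nm) ^ 2) := (Real.sqrt_sq (by positivity)).symm
    rw [h5, h4, Real.sqrt_sq (by positivity)]
  set e1 : Fin d → ℂ := ((np : ℂ))⁻¹ • (v1 + u2) with he1def
  set e2 : Fin d → ℂ := ((nm : ℂ))⁻¹ • (v1 - u2) with he2def
  have hnp2' : np * np = 2 + 2 * r := by nlinarith [hnp2]
  have hnm2' : nm * nm = 2 - 2 * r := by nlinarith [hnm2]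
  have hnpC : (np : ℂ) * np = 2 + 2 * (r : ℂ) := by exact_mod_cast congrArg Complex.ofReal hnp2'
  have hnmC : (nm : ℂ) * nm = 2 - 2 * (r : ℂ) := by exact_mod_cast congrArg Complex.ofReal hnm2'
  have hnpne : (np : ℂ) ≠ 0 := Complex.ofReal_ne_zero.mpr (ne_of_gt hnppos)
  have hnmne : (nm : ℂ) ≠ 0 := Complex.ofReal_ne_zero.mpr (ne_of_gt hnmpos)
  have he11 : star e1 ⬝ᵥ e1 = 1 := by
    simp only [he1def, star_smul, smul_dotProduct, dotProduct_smul, star_add, add_dotProduct,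
      dotProduct_add, hv1v1, hv1u2, hu2v1, hu2u2, smul_eq_mul, star_inv₀, Complex.star_def,
      Complex.conj_ofReal]
    field_simp
    linear_combination (-1 : ℂ) * hnpC
  have he22 : star e2 ⬝ᵥ e2 = 1 := by
    simp only [he2def, star_smul, smul_dotProduct, dotProduct_smul, star_sub, sub_dotProduct,
      dotProduct_sub, hv1v1, hv1u2, hu2v1, hu2u2, smul_eq_mul, star_inv₀, Complex.star_def,
      Complex.conj_ofReal]
    field_simp
    linear_combination (-1 : ℂ) * hnmC
  have he12 : star e1 ⬝ᵥ e2 = 0 := by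
    simp only [he1def, he2def, star_smul, smul_dotProduct, dotProduct_smul, star_add,
      add_dotProduct, dotProduct_sub, hv1v1, hv1u2, hu2v1, hu2u2, smul_eq_mul, star_inv₀,
      Complex.star_def, Complex.conj_ofReal]
    ring_nf
  have he21 : star e2 ⬝ᵥ e1 = 0 := by
    rw [star_dotProduct, he12]
    simp
  -- overlaps with the states
  have he1v1 : star e1 ⬝ᵥ v1 = ((np / 2 : ℝ) : ℂ) := by
    simp only [he1def, star_smul, smul_dotProduct, star_add, add_dotProduct, hv1v1, hu2v1,
      smul_eq_mul, star_inv₀, Complex.star_def, Complex.conj_ofReal]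
    push_cast
    field_simp
    linear_combination (-1 : ℂ) * hnpC
  have hv1e1 : star v1 ⬝ᵥ e1 = ((np / 2 : ℝ) : ℂ) := by
    rw [star_dotProduct, he1v1]
    simp [Complex.star_def, Complex.conj_ofReal]
  have he2v1 : star e2 ⬝ᵥ v1 = ((nm / 2 : ℝ) : ℂ) := by
    simp only [he2def, star_smul, smul_dotProduct, star_sub, sub_dotProduct, hv1v1, hu2v1,
      smul_eq_mul, star_inv₀, Complex.star_def, Complex.conj_ofReal]
    push_cast
    field_simp
    linear_combination (-1 : ℂ) * hnmC
  have hv1e2 : star v1 ⬝ᵥ e2 = ((nm / 2 : ℝ) : ℂ) := by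
    rw [star_dotProduct, he2v1]
    simp [Complex.star_def, Complex.conj_ofReal]
  have he1u2 : star e1 ⬝ᵥ u2 = ((np / 2 : ℝ) : ℂ) := by
    simp only [he1def, star_smul, smul_dotProduct, star_add, add_dotProduct, hv1u2, hu2u2,
      smul_eq_mul, star_inv₀, Complex.star_def, Complex.conj_ofReal]
    push_cast
    field_simp
    linear_combination (-1 : ℂ) * hnpC
  have hu2e1 : star u2 ⬝ᵥ e1 = ((np / 2 : ℝ) : ℂ) := by
    rw [star_dotProduct, he1u2]
    simp [Complex.star_def, Complex.conj_ofReal]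
  have he2u2 : star e2 ⬝ᵥ u2 = ((-(nm / 2) : ℝ) : ℂ) := by
    simp only [he2def, star_smul, smul_dotProduct, star_sub, sub_dotProduct, hv1u2, hu2u2,
      smul_eq_mul, star_inv₀, Complex.star_def, Complex.conj_ofReal]
    push_cast
    field_simp
    linear_combination hnmC
  have hu2e2 : star u2 ⬝ᵥ e2 = ((-(nm / 2) : ℝ) : ℂ) := by
    rw [star_dotProduct, he2u2]
    simp [Complex.star_def, Complex.conj_ofReal]
  -- operators
  set X : Matrix (Fin d) (Fin d) ℂ := op e1 e2 + op e2 e1 with hXdef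
  set Z : Matrix (Fin d) (Fin d) ℂ := op e1 e1 - op e2 e2 with hZdef
  have hXH : Xᴴ = X := by
    rw [hXdef, conjTranspose_add, op_conjT, op_conjT, add_comm]
  have hZH : Zᴴ = Z := by
    rw [hZdef, conjTranspose_sub, op_conjT, op_conjT]
  set σ1 : Matrix (Fin d) (Fin d) ℂ := op v1 v1 with hσ1def
  set σ2 : Matrix (Fin d) (Fin d) ℂ := op u2 u2 with hσ2def
  have houter1 : outer u1 = σ1 := by
    rw [hσ1def]
    ext i j
    simp only [outer, TwoCopy.op, vecMulVec_apply, hv1def, Pi.smul_apply, Pi.star_apply,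
      star_smul, smul_eq_mul, Complex.star_def]
    linear_combination (-(u1 i * (starRingEnd ℂ) (u1 j))) * hph1
  have houter2 : outer u2 = σ2 := rfl
  -- state traces
  have tS1 : σ1.trace = ((1 : ℝ) : ℂ) := by
    rw [hσ1def, trace_op, hv1v1]
    norm_num
  have hσmul : ∀ (u : Fin d → ℂ) (x y : Fin d → ℂ),
      (op u u * op x y).trace = (star u ⬝ᵥ x) * (star y ⬝ᵥ u) := by
    intro u x y
    rw [op_mul_op, trace_smul, trace_op, smul_eq_mul]
  have tS1X : (σ1 * X).trace = ((w : ℝ) : ℂ) := by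
    rw [hσ1def, hXdef, mul_add, trace_add, hσmul, hσmul, hv1e1, he2v1, hv1e2, he1v1]
    rw [← Complex.ofReal_mul, ← Complex.ofReal_mul, ← Complex.ofReal_add]
    congr 1
    nlinarith [hnpnm]
  have tS1Z : (σ1 * Z).trace = ((r : ℝ) : ℂ) := by
    rw [hσ1def, hZdef, mul_sub, trace_sub, hσmul, hσmul, hv1e1, he1v1, hv1e2, he2v1]
    rw [← Complex.ofReal_mul, ← Complex.ofReal_mul, ← Complex.ofReal_sub]
    congr 1
    nlinarith [hnp2', hnm2']
  have tS2 : σ2.trace = ((1 : ℝ) : ℂ) := by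
    rw [hσ2def, trace_op, hu2u2]
    norm_num
  have tS2X : (σ2 * X).trace = ((-w : ℝ) : ℂ) := by
    rw [hσ2def, hXdef, mul_add, trace_add, hσmul, hσmul, hu2e1, he2u2, hu2e2, he1u2]
    rw [← Complex.ofReal_mul, ← Complex.ofReal_mul, ← Complex.ofReal_add]
    congr 1
    nlinarith [hnpnm]
  have tS2Z : (σ2 * Z).trace = ((r : ℝ) : ℂ) := by
    rw [hσ2def, hZdef, mul_sub, trace_sub, hσmul, hσmul, hu2e1, he1u2, hu2e2, he2u2]
    rw [← Complex.ofReal_mul, ← Complex.ofReal_mul, ← Complex.ofReal_sub]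
    congr 1
    nlinarith [hnp2', hnm2']
  -- measurement operators
  set hh : ℝ := (w ^ 2 - r ^ 2) / (2 * w ^ 3) with hhdef
  set hb : ℝ := r / (2 * w ^ 3) with hbdef
  set T : Mat d d := (hh : ℂ) • (X ⊗ₖ (1 : Matrix (Fin d) (Fin d) ℂ)
      + (1 : Matrix (Fin d) (Fin d) ℂ) ⊗ₖ X) + (hb : ℂ) • (X ⊗ₖ Z + Z ⊗ₖ X) with hTdef
  set M1 : Mat d d := (1 / 2 : ℂ) • (1 + T) with hM1def
  set M2 : Mat d d := (1 / 2 : ℂ) • (1 - T) with hM2def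
  have hhalfstar : star (1 / 2 : ℂ) = 1 / 2 := by
    rw [Complex.star_def, ← Complex.ofReal_one, ← Complex.ofReal_ofNat, ← Complex.ofReal_div,
      Complex.conj_ofReal]
  have hTH : Tᴴ = T := by
    rw [hTdef, conjTranspose_add, conjTranspose_smul, conjTranspose_smul, conjTranspose_add,
      conjTranspose_add, kron_conjT, kron_conjT, kron_conjT, kron_conjT, hXH, hZH,
      conjTranspose_one]
    congr 1 <;> rw [Complex.star_def, Complex.conj_ofReal]
  have hM1H : M1.IsHermitian := by
    show M1ᴴ = M1
    rw [hM1def, conjTranspose_smul, conjTranspose_add, conjTranspose_one, hTH, hhalfstar]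
  have hM2H : M2.IsHermitian := by
    show M2ᴴ = M2
    rw [hM2def, conjTranspose_smul, conjTranspose_sub, conjTranspose_one, hTH, hhalfstar]
  -- master trace formula
  have hTr : ∀ (A B : Matrix (Fin d) (Fin d) ℂ) (aA xA zA aB xB zB : ℝ),
      A.trace = (aA : ℂ) → (A * X).trace = (xA : ℂ) → (A * Z).trace = (zA : ℂ) →
      B.trace = (aB : ℂ) → (B * X).trace = (xB : ℂ) → (B * Z).trace = (zB : ℂ) →
      ((A ⊗ₖ B) * T).trace
        = ((hh * (xA * aB + aA * xB) + hb * (xA * zB + zA * xB) : ℝ) : ℂ) := by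
    intro A B aA xA zA aB xB zB t1 t2 t3 t4 t5 t6
    rw [hTdef, mul_add, trace_add, mul_smul_comm, mul_smul_comm, trace_smul, trace_smul,
      mul_add, mul_add, trace_add, trace_add, ← mul_kronecker_mul, ← mul_kronecker_mul,
      ← mul_kronecker_mul, ← mul_kronecker_mul, mul_one, mul_one,
      trace_kronecker, trace_kronecker, trace_kronecker, trace_kronecker,
      t1, t2, t3, t4, t5, t6, smul_eq_mul, smul_eq_mul]
    push_cast
    ring
  have hTrM1 : ∀ (A B : Matrix (Fin d) (Fin d) ℂ) (aA xA zA aB xB zB : ℝ),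
      A.trace = (aA : ℂ) → (A * X).trace = (xA : ℂ) → (A * Z).trace = (zA : ℂ) →
      B.trace = (aB : ℂ) → (B * X).trace = (xB : ℂ) → (B * Z).trace = (zB : ℂ) →
      ((A ⊗ₖ B) * M1).trace
        = (((aA * aB + (hh * (xA * aB + aA * xB) + hb * (xA * zB + zA * xB))) / 2 : ℝ) : ℂ) := by
    intro A B aA xA zA aB xB zB t1 t2 t3 t4 t5 t6
    rw [hM1def, mul_smul_comm, trace_smul, mul_add, mul_one, trace_add, trace_kronecker,
      t1, t4, hTr A B aA xA zA aB xB zB t1 t2 t3 t4 t5 t6, smul_eq_mul]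
    push_cast
    ring
  have hTrM2 : ∀ (A B : Matrix (Fin d) (Fin d) ℂ) (aA xA zA aB xB zB : ℝ),
      A.trace = (aA : ℂ) → (A * X).trace = (xA : ℂ) → (A * Z).trace = (zA : ℂ) →
      B.trace = (aB : ℂ) → (B * X).trace = (xB : ℂ) → (B * Z).trace = (zB : ℂ) →
      ((A ⊗ₖ B) * M2).trace
        = (((aA * aB - (hh * (xA * aB + aA * xB) + hb * (xA * zB + zA * xB))) / 2 : ℝ) : ℂ) := by
    intro A B aA xA zA aB xB zB t1 t2 t3 t4 t5 t6
    rw [hM2def, mul_smul_comm, trace_smul, mul_sub, mul_one, trace_sub, trace_kronecker,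
      t1, t4, hTr A B aA xA zA aB xB zB t1 t2 t3 t4 t5 t6, smul_eq_mul]
    push_cast
    ring
  refine ⟨M1, M2, ⟨hM1H, ?_⟩, ⟨hM2H, ?_⟩, ?_, ?_, ?_, ?_, ?_⟩
  · -- M1 ∈ SEP*
    intro A B hA hB
    obtain ⟨aA, xA, zA, e1A, e2A, e3A, haA, hbA⟩ := psd_bloch hA e1 e2 he11 he22 he12 he21
    obtain ⟨aB, xB, zB, e1B, e2B, e3B, haB, hbB⟩ := psd_bloch hB e1 e2 he11 he22 he12 he21
    rw [hTrM1 A B aA xA zA aB xB zB e1A e2A e3A e1B e2B e3B]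
    rw [Complex.zero_le_real, hhdef, hbdef]
    have hk := scalar_key r w aA xA zA aB xB zB hr0 hrw hwpos hw2 haA haB hbA hbB
    linarith [hk]
  · -- M2 ∈ SEP*
    intro A B hA hB
    obtain ⟨aA, xA, zA, e1A, e2A, e3A, haA, hbA⟩ := psd_bloch hA e1 e2 he11 he22 he12 he21
    obtain ⟨aB, xB, zB, e1B, e2B, e3B, haB, hbB⟩ := psd_bloch hB e1 e2 he11 he22 he12 he21
    rw [hTrM2 A B aA xA zA aB xB zB e1A e2A e3A e1B e2B e3B]
    rw [Complex.zero_le_real, hhdef, hbdef]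
    have hk := scalar_key r w aA (-xA) zA aB (-xB) zB hr0 hrw hwpos hw2 haA haB
      (by rw [neg_pow]; simpa using hbA) (by rw [neg_pow]; simpa using hbB)
    linarith [hk]
  · -- M1 + M2 = 1
    rw [hM1def, hM2def, ← smul_add]
    have : (1 : Mat d d) + T + (1 - T) = (2 : ℂ) • 1 := by
      rw [two_smul]; abel
    rw [this, smul_smul]
    norm_num
  · -- (M1 * ρ1).trace = 1
    rw [houter1, Matrix.trace_mul_comm,
      hTrM1 σ1 σ1 1 w r 1 w r tS1 tS1X tS1Z tS1 tS1X tS1Z]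
    rw [hhdef, hbdef]
    have : (1 * 1 + ((w ^ 2 - r ^ 2) / (2 * w ^ 3) * (w * 1 + 1 * w)
        + r / (2 * w ^ 3) * (w * r + r * w))) / 2 = 1 := by
      field_simp
      ring
    rw [this]
    norm_num
  · -- (M2 * ρ2).trace = 1
    rw [houter2, Matrix.trace_mul_comm,
      hTrM2 σ2 σ2 1 (-w) r 1 (-w) r tS2 tS2X tS2Z tS2 tS2X tS2Z]
    rw [hhdef, hbdef]
    have : (1 * 1 - ((w ^ 2 - r ^ 2) / (2 * w ^ 3) * (-w * 1 + 1 * -w)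
        + r / (2 * w ^ 3) * (-w * r + r * -w))) / 2 = 1 := by
      field_simp
      ring
    rw [this]
    norm_num
  · -- (M2 * ρ1).trace = 0
    rw [houter1, Matrix.trace_mul_comm,
      hTrM2 σ1 σ1 1 w r 1 w r tS1 tS1X tS1Z tS1 tS1X tS1Z]
    rw [hhdef, hbdef]
    have : (1 * 1 - ((w ^ 2 - r ^ 2) / (2 * w ^ 3) * (w * 1 + 1 * w)
        + r / (2 * w ^ 3) * (w * r + r * w))) / 2 = 0 := by
      field_simp
      ring
    rw [this]
    norm_num
  · -- (M1 * ρ2).trace = 0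
    rw [houter2, Matrix.trace_mul_comm,
      hTrM1 σ2 σ2 1 (-w) r 1 (-w) r tS2 tS2X tS2Z tS2 tS2X tS2Z]
    rw [hhdef, hbdef]
    have : (1 * 1 + ((w ^ 2 - r ^ 2) / (2 * w ^ 3) * (-w * 1 + 1 * -w)
        + r / (2 * w ^ 3) * (-w * r + r * -w))) / 2 = 0 := by
      field_simp
      ring
    rw [this]
    norm_num
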